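/- The transformed function 𝔔_{α,F,C} satisfies 𝔔_{α,F,C}(u, 1,…,1) = u for all u ∈ [0,1], i.e., its first marginal is uniform on [0,1]. -/
import Mathlib


open MeasureTheory Set Filter

/-- `F(n-1)` with the convention `F(-1) = 0`. -/
noncomputable def Fm (F : ℕ → ℝ) : ℕ → ℝ := fun n => if n = 0 then 0 else F (n - 1)

/-- `F_α(n) = (1-α) F(n-1) + α F(n)`. -/
noncomputable def Falpha (α : ℝ) (F : ℕ → ℝ) (n : ℕ) : ℝ :=
  (1 - α) * Fm F n + α * F n

/-- `⌈u⌉_{α,F} = Σ_{n ≥ 0} F_α(n) · 1_{(F(n-1), F(n)]}(u)`, with `⌈0⌉ = 0` automatic. -/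
noncomputable def ceilT (α : ℝ) (F : ℕ → ℝ) (u : ℝ) : ℝ :=
  ∑' n : ℕ, Falpha α F n * Set.indicator (Set.Ioc (Fm F n) (F n)) (fun _ => (1 : ℝ)) u

/-- `𝔔_{α,F,C}(u,v) = ∫_{[0,u]×[0,v]} c(⌈s⌉_{α,F}, t) dλ^{d+1}(s,t)`,
the distribution function of the transformed density. -/
noncomputable def Qbox (d : ℕ) (α : ℝ) (F : ℕ → ℝ) (c : ℝ → (Fin d → ℝ) → ℝ)
    (u : ℝ) (v : Fin d → ℝ) : ℝ :=
  ∫ p in (Set.Icc (0 : ℝ) u) ×ˢ (Set.Icc (0 : Fin d → ℝ) v), c (ceilT α F p.1) p.2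

/-- the first marginal of the transformed distribution function is uniform:
`𝔔_{α,F,C}(u, 1, …, 1) = u` for all `u ∈ [0,1]`. -/
theorem stmt5 (d : ℕ) (F : ℕ → ℝ) (hmono : Monotone F) (hF0 : ∀ n, 0 ≤ F n)
    (hF1 : ∀ n, F n ≤ 1) (hlim : Tendsto F atTop (nhds 1))
    (α : ℝ) (hα : α ∈ Set.Ioc (0 : ℝ) 1)
    (c : ℝ → (Fin d → ℝ) → ℝ)
    (hc_meas : Measurable (Function.uncurry c))
    (hc_nonneg : ∀ u v, 0 ≤ c u v)
    (hc_sec : ∀ u ∈ Set.Icc (0 : ℝ) 1, ∫ v in Set.Icc (0 : Fin d → ℝ) 1, c u v = 1)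
    (hc_int : IntegrableOn (fun p : ℝ × (Fin d → ℝ) => c (ceilT α F p.1) p.2)
      ((Set.Icc (0 : ℝ) 1) ×ˢ (Set.Icc (0 : Fin d → ℝ) 1))) :
    ∀ u ∈ Set.Icc (0 : ℝ) 1, Qbox d α F c u (fun _ => 1) = u := by
  -- ceilT always lands in [0,1]
  have hFm0 : ∀ n, 0 ≤ Fm F n := by
    intro n; unfold Fm; split <;> [rfl; exact hF0 _]
  have hFm1 : ∀ n, Fm F n ≤ 1 := by
    intro n; unfold Fm; split <;> [norm_num; exact hF1 _]
  have hmem : ∀ s : ℝ, ceilT α F s ∈ Set.Icc (0 : ℝ) 1 := by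
    intro s
    have hFal : ∀ n, Falpha α F n ∈ Set.Icc (0 : ℝ) 1 := by
      intro n
      constructor
      · have := mul_nonneg (by linarith [hα.2] : (0:ℝ) ≤ 1 - α) (hFm0 n)
        have := mul_nonneg (le_of_lt hα.1) (hF0 n)
        unfold Falpha; linarith
      · have h1 : (1 - α) * Fm F n ≤ (1 - α) * 1 :=
          mul_le_mul_of_nonneg_left (hFm1 n) (by linarith [hα.2])
        have h2 : α * F n ≤ α * 1 :=
          mul_le_mul_of_nonneg_left (hF1 n) (le_of_lt hα.1)
        unfold Falpha; linarith
    by_cases hex : ∃ n, s ∈ Set.Ioc (Fm F n) (F n)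
    · obtain ⟨n, hn⟩ := hex
      have hdisj : ∀ m, m ≠ n →
          Falpha α F m * Set.indicator (Set.Ioc (Fm F m) (F m)) (fun _ => (1:ℝ)) s = 0 := by
        intro m hm
        have hnot : s ∉ Set.Ioc (Fm F m) (F m) := by
          intro hs
          rcases lt_or_gt_of_ne hm with h | h
          · -- m < n : F m ≤ Fm F n
            have hle : F m ≤ Fm F n := by
              unfold Fm
              have : n ≠ 0 := Nat.pos_iff_ne_zero.mp (Nat.lt_of_le_of_lt (Nat.zero_le m) h)
              rw [if_neg this]
              exact hmono (Nat.le_sub_one_of_lt h)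
            exact absurd (hs.2.trans_lt (hle.trans_lt hn.1)) (lt_irrefl s)
          · have hle : F n ≤ Fm F m := by
              unfold Fm
              have : m ≠ 0 := Nat.pos_iff_ne_zero.mp (Nat.lt_of_le_of_lt (Nat.zero_le n) h)
              rw [if_neg this]
              exact hmono (Nat.le_sub_one_of_lt h)
            exact absurd (hn.2.trans_lt (hle.trans_lt hs.1)) (lt_irrefl s)
        rw [Set.indicator_of_notMem hnot, mul_zero]
      have : ceilT α F s = Falpha α F n := by
        unfold ceilT
        rw [tsum_eq_single n hdisj, Set.indicator_of_mem hn, mul_one]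
      rw [this]; exact hFal n
    · push_neg at hex
      have : ceilT α F s = 0 := by
        unfold ceilT
        convert tsum_zero with n
        rw [Set.indicator_of_notMem (hex n), mul_zero]
      rw [this]; exact ⟨le_refl 0, zero_le_one⟩
  intro u hu
  have hsub : (Set.Icc (0:ℝ) u) ×ˢ (Set.Icc (0 : Fin d → ℝ) 1) ⊆
      (Set.Icc (0:ℝ) 1) ×ˢ (Set.Icc (0 : Fin d → ℝ) 1) :=
    Set.prod_mono (Set.Icc_subset_Icc_right hu.2) subset_rfl
  have hint : IntegrableOn (fun p : ℝ × (Fin d → ℝ) => c (ceilT α F p.1) p.2)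
      ((Set.Icc (0:ℝ) u) ×ˢ (Set.Icc (0 : Fin d → ℝ) 1)) := hc_int.mono_set hsub
  have h1 : (fun _ => (1:ℝ)) = ((1 : Fin d → ℝ)) := rfl
  unfold Qbox
  rw [h1]
  rw [show (volume : Measure (ℝ × (Fin d → ℝ))) = Measure.prod volume volume from
    Measure.volume_eq_prod _ _]
  rw [setIntegral_prod _ (by rw [← Measure.volume_eq_prod]; exact hint)]
  have heq : ∀ s : ℝ, (∫ t in Set.Icc (0 : Fin d → ℝ) 1, c (ceilT α F s) t) = 1 :=
    fun s => hc_sec _ (hmem s)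
  simp_rw [heq]
  simp [Real.volume_Icc, hu.1]
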